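/- For any x, y ∈ ℂ one has the theta-like identity Σ_{ω∈L} exp(-π|ω+x|²/a(L) - 2πi E_L(ω+x, y)) = Σ_{ω∈L} exp(-π|ω+y|²/a(L) - 2πi E_L(ω, x)). -/

import Mathlib

open scoped Real Topology
open Complex MeasureTheory Filter ComplexConjugate

noncomputable section

/-- The lattice point `m·ω₁ + n·ω₂` indexed by `p = (m, n) : ℤ × ℤ`. -/
def lat (ω₁ ω₂ : ℂ) (p : ℤ × ℤ) : ℂ := (p.1 : ℂ) * ω₁ + (p.2 : ℂ) * ω₂

/-- Membership in the lattice `L = ℤω₁ + ℤω₂`. -/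
def inLat (ω₁ ω₂ : ℂ) (x : ℂ) : Prop := ∃ p : ℤ × ℤ, x = lat ω₁ ω₂ p

/-- The covolume `a(L) = Im(conj ω₁ · ω₂)`. -/
def covol (ω₁ ω₂ : ℂ) : ℝ := (conj ω₁ * ω₂).im

/-- The symplectic form `E_L(x,y) = Im(conj x · y)/a(L)`. -/
def Esymp (ω₁ ω₂ : ℂ) (x y : ℂ) : ℝ := (conj x * y).im / covol ω₁ ω₂

lemma key_decomp (p q z : ℂ) :
    ((conj p * z).im : ℂ) * q - ((conj q * z).im : ℂ) * p = ((conj p * q).im : ℂ) * z := by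
  apply Complex.ext <;>
    simp [Complex.mul_im, Complex.mul_re] <;> ring

lemma normSq_comb (ω₁ ω₂ : ℂ) (s t : ℝ) :
    Complex.normSq ((s:ℂ) * ω₁ + (t:ℂ) * ω₂)
      = Complex.normSq ω₁ * s ^ 2 + 2 * (conj ω₁ * ω₂).re * (s * t)
        + Complex.normSq ω₂ * t ^ 2 := by
  simp [Complex.normSq_apply, Complex.mul_re, Complex.mul_im]
  ring

lemma im_comb (ω₁ ω₂ : ℂ) (s t s' t' : ℝ) :
    (conj ((s:ℂ) * ω₁ + (t:ℂ) * ω₂) * ((s':ℂ) * ω₁ + (t':ℂ) * ω₂)).im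
      = (s * t' - t * s') * (conj ω₁ * ω₂).im := by
  simp [Complex.mul_im, Complex.mul_re, Complex.add_re, Complex.add_im]
  ring


lemma term_eq (b : ℝ) (u v : ℂ) (n : ℤ) :
    cexp (-π * b * (n + u) ^ 2 + 2 * π * I * n * v)
      = cexp (-π * b * u ^ 2) * jacobiTheta₂_term n (v + I * b * u) (I * b) := by
  rw [jacobiTheta₂_term, ← Complex.exp_add]
  congr 1
  ring_nf
  rw [I_sq]
  ring

lemma funeq_term (b : ℝ) (hb : 0 < b) (u v : ℂ) (k : ℤ) :
    cexp (-π * (k + v) ^ 2 / b - 2 * π * I * k * u)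
      = cexp (-π * v ^ 2 / b) * jacobiTheta₂_term (-k) (u - I * v / b) (I / b) := by
  have hb0 : (b : ℂ) ≠ 0 := by exact_mod_cast hb.ne'
  rw [jacobiTheta₂_term, ← Complex.exp_add]
  congr 1
  push_cast
  field_simp
  ring_nf
  rw [I_sq]
  ring

lemma sumA {b : ℝ} (hb : 0 < b) (u v : ℂ) :
    Summable (fun n : ℤ => cexp (-π * b * (n + u) ^ 2 + 2 * π * I * n * v)) := by
  have h : Summable (jacobiTheta₂_term · (v + I * b * u) (I * b)) := by
    rw [summable_jacobiTheta₂_term_iff]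
    simpa using hb
  have := h.mul_left (cexp (-π * b * u ^ 2))
  refine this.congr fun n => (term_eq b u v n).symm

lemma lemA {b : ℝ} (hb : 0 < b) (u v : ℂ) :
    ∑' n : ℤ, cexp (-π * b * (n + u) ^ 2 + 2 * π * I * n * v)
      = (Real.sqrt b : ℂ)⁻¹ * cexp (-2 * π * I * u * v) *
        ∑' k : ℤ, cexp (-π * (k + v) ^ 2 / b - 2 * π * I * k * u) := by
  have hb0 : (b : ℂ) ≠ 0 := by exact_mod_cast hb.ne'
  have h1 : ∑' n : ℤ, cexp (-π * b * (n + u) ^ 2 + 2 * π * I * n * v)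
      = cexp (-π * b * u ^ 2) * jacobiTheta₂ (v + I * b * u) (I * b) := by
    rw [jacobiTheta₂, ← tsum_mul_left]
    exact tsum_congr (term_eq b u v)
  have h2 : ∑' k : ℤ, cexp (-π * (k + v) ^ 2 / b - 2 * π * I * k * u)
      = cexp (-π * v ^ 2 / b) * jacobiTheta₂ (u - I * v / b) (I / b) := by
    rw [jacobiTheta₂, ← tsum_mul_left, ← (Equiv.neg ℤ).tsum_eq
      (fun k => cexp (-π * v ^ 2 / b) * jacobiTheta₂_term k (u - I * v / b) (I / b))]
    exact tsum_congr fun k => by simpa using funeq_term b hb u v k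
  rw [h1, h2, jacobiTheta₂_functional_equation]
  have hz : (v + I * b * u) / (I * b) = u - I * v / b := by
    field_simp
    ring_nf
    rw [I_sq]
    ring
  have hτ : (-1 : ℂ) / (I * b) = I / b := by
    field_simp
    ring_nf
    rw [I_sq]
  rw [hz, hτ]
  have hsq : ((-I * (I * (b:ℂ))) ^ (1/2 : ℂ)) = (Real.sqrt b : ℂ) := by
    have : (-I * (I * (b:ℂ))) = (b:ℂ) := by
      rw [← mul_assoc, neg_mul, I_mul_I]; ring
    rw [this, show ((1:ℂ)/2) = ((1/2 : ℝ) : ℂ) by norm_num,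
      ← Complex.ofReal_cpow hb.le, ← Real.sqrt_eq_rpow]
  rw [hsq]
  rw [show ∀ a c d e : ℂ, a * (1 / c * d * e) = (a * d) * c⁻¹ * e from fun _ _ _ _ => by
    rw [one_div]; ring]
  rw [show ∀ c d e f : ℂ, c⁻¹ * d * (e * f) = (d * e) * c⁻¹ * f from fun _ _ _ _ => by ring]
  congr 2
  rw [← Complex.exp_add, ← Complex.exp_add]
  congr 1
  field_simp
  ring_nf
  rw [I_sq]
  ring

/-- summability of real Gaussian over ℤ -/
lemma sumR {b : ℝ} (hb : 0 < b) (x : ℝ) :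
    Summable (fun m : ℤ => Real.exp (-(π * b) * ((m : ℝ) + x) ^ 2)) := by
  have := (sumA hb (x : ℂ) 0).norm
  refine this.congr fun m => ?_
  have h1 : (-↑π * ↑b * ((m : ℂ) + ↑x) ^ 2 + 2 * ↑π * I * ↑m * 0)
      = ((-(π * b) * ((m : ℝ) + x) ^ 2 : ℝ) : ℂ) := by push_cast; ring
  rw [h1, Complex.norm_exp, Complex.ofReal_re]

lemma norm_cexp_eq (z : ℂ) (r s : ℝ) (h : z = (r : ℂ) + (s : ℂ) * I) :
    ‖cexp z‖ = Real.exp r := by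
  rw [h, Complex.norm_exp]
  simp

/-- 2D summability from a product Gaussian bound -/
lemma sum2D {c1 c2 : ℝ} (hc1 : 0 < c1) (hc2 : 0 < c2) (a1 a2 : ℝ) (f : ℤ × ℤ → ℂ)
    (hf : ∀ p : ℤ × ℤ, ‖f p‖ ≤
      Real.exp (-(π * c1) * ((p.1 : ℝ) + a1) ^ 2) * Real.exp (-(π * c2) * ((p.2 : ℝ) + a2) ^ 2)) :
    Summable f :=
  Summable.of_norm_bounded
    ((sumR hc1 a1).mul_of_nonneg (sumR hc2 a2) (fun _ => (Real.exp_pos _).le)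
      (fun _ => (Real.exp_pos _).le)) hf

lemma Qbound {A B C : ℝ} (hA : 0 < A) (hC : 0 < C) (hAC : A * C = B ^ 2 + 1) (s t : ℝ) :
    s ^ 2 * (2 * C)⁻¹ + t ^ 2 * (2 * A)⁻¹ ≤ A * s ^ 2 + 2 * B * s * t + C * t ^ 2 := by
  have h1 : (B * s + C * t) ^ 2 ≥ 0 := sq_nonneg _
  have h2 : (A * s + B * t) ^ 2 ≥ 0 := sq_nonneg _
  have e1 : C * (A * s ^ 2 + 2 * B * s * t + C * t ^ 2) - s ^ 2 = (B * s + C * t) ^ 2 := by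
    nlinarith [hAC]
  have e2 : A * (A * s ^ 2 + 2 * B * s * t + C * t ^ 2) - t ^ 2 = (A * s + B * t) ^ 2 := by
    nlinarith [hAC]
  have g1 : s ^ 2 * C⁻¹ ≤ A * s ^ 2 + 2 * B * s * t + C * t ^ 2 := by
    rw [← sub_nonneg]
    have := div_nonneg (e1 ▸ h1) hC.le
    calc (0:ℝ) ≤ (C * (A * s ^ 2 + 2 * B * s * t + C * t ^ 2) - s ^ 2) / C := this
      _ = A * s ^ 2 + 2 * B * s * t + C * t ^ 2 - s ^ 2 * C⁻¹ := by field_simp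
  have g2 : t ^ 2 * A⁻¹ ≤ A * s ^ 2 + 2 * B * s * t + C * t ^ 2 := by
    rw [← sub_nonneg]
    have := div_nonneg (e2 ▸ h2) hA.le
    calc (0:ℝ) ≤ (A * (A * s ^ 2 + 2 * B * s * t + C * t ^ 2) - t ^ 2) / A := this
      _ = A * s ^ 2 + 2 * B * s * t + C * t ^ 2 - t ^ 2 * A⁻¹ := by field_simp
  have hC2 : s ^ 2 * (2*C)⁻¹ = (s ^ 2 * C⁻¹) / 2 := by ring
  have hA2 : t ^ 2 * (2*A)⁻¹ = (t ^ 2 * A⁻¹) / 2 := by ring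
  linarith


section steps
variable (A B C x₁ x₂ y₁ y₂ : ℝ)

/-- intermediate term after transforming in `n` -/
def Gt (m k : ℤ) : ℂ :=
  cexp (-↑π * (↑m + ↑x₁) ^ 2 / ↑C + 2 * ↑π * I * (↑m + ↑x₁) * (-↑y₂ - ↑B * (↑k + ↑y₁) / ↑C)
    - 2 * ↑π * I * ↑k * ↑x₂ - ↑π * (↑k + ↑y₁) ^ 2 / ↑C)

/-- final term after transforming in `m` too -/
def Et (j k : ℤ) : ℂ :=
  cexp (-↑π * ↑C * (↑j - ↑y₂ - ↑B * (↑k + ↑y₁) / ↑C) ^ 2 - 2 * ↑π * I * ↑j * ↑x₁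
    - 2 * ↑π * I * ↑k * ↑x₂ - ↑π * (↑k + ↑y₁) ^ 2 / ↑C)

lemma step2 (hA : 0 < A) (hC : 0 < C) (hAC : A * C = B ^ 2 + 1) (m : ℤ) :
    ∑' n : ℤ, cexp (-↑π * (↑A * (↑m + ↑x₁) ^ 2 + 2 * ↑B * (↑m + ↑x₁) * (↑n + ↑x₂)
          + ↑C * (↑n + ↑x₂) ^ 2)
        - 2 * ↑π * I * ((↑m + ↑x₁) * ↑y₂ - (↑n + ↑x₂) * ↑y₁))
      = (Real.sqrt C : ℂ)⁻¹ * ∑' k : ℤ, Gt B C x₁ x₂ y₁ y₂ m k := by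
  have hC0 : (C : ℂ) ≠ 0 := by exact_mod_cast hC.ne'
  have hA' : (A : ℂ) = ((B : ℂ) ^ 2 + 1) / C := by
    field_simp
    exact_mod_cast hAC
  set u : ℂ := ↑x₂ + ↑B * (↑m + ↑x₁) / ↑C with hu
  set K : ℂ := -↑π * (↑m + ↑x₁) ^ 2 / ↑C - 2 * ↑π * I * (↑m + ↑x₁) * ↑y₂
      + 2 * ↑π * I * ↑x₂ * ↑y₁ with hK
  have e : ∀ n : ℤ, cexp (-↑π * (↑A * (↑m + ↑x₁) ^ 2 + 2 * ↑B * (↑m + ↑x₁) * (↑n + ↑x₂)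
          + ↑C * (↑n + ↑x₂) ^ 2)
        - 2 * ↑π * I * ((↑m + ↑x₁) * ↑y₂ - (↑n + ↑x₂) * ↑y₁))
      = cexp K * cexp (-↑π * ↑C * (↑n + u) ^ 2 + 2 * ↑π * I * ↑n * ↑y₁) := by
    intro n
    rw [← Complex.exp_add]
    congr 1
    rw [hA', hK, hu]
    field_simp
    ring
  rw [tsum_congr e, tsum_mul_left, lemA hC u (↑y₁ : ℂ)]
  rw [show cexp K * ((Real.sqrt C : ℂ)⁻¹ * cexp (-2 * ↑π * I * u * ↑y₁) *
        ∑' k : ℤ, cexp (-↑π * (↑k + ↑y₁) ^ 2 / ↑C - 2 * ↑π * I * ↑k * u))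
      = (Real.sqrt C : ℂ)⁻¹ * ((cexp K * cexp (-2 * ↑π * I * u * ↑y₁)) *
        ∑' k : ℤ, cexp (-↑π * (↑k + ↑y₁) ^ 2 / ↑C - 2 * ↑π * I * ↑k * u)) from by ring]
  rw [← tsum_mul_left]
  congr 1
  refine tsum_congr fun k => ?_
  rw [← Complex.exp_add, ← Complex.exp_add, Gt]
  congr 1
  rw [hK, hu]
  field_simp
  ring

lemma step5 (hC : 0 < C) (k : ℤ) :
    ∑' m : ℤ, Gt B C x₁ x₂ y₁ y₂ m k
      = (Real.sqrt C : ℂ) * ∑' j : ℤ, Et B C x₁ x₂ y₁ y₂ j k := by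
  have hC0 : (C : ℂ) ≠ 0 := by exact_mod_cast hC.ne'
  have hinvC : (0 : ℝ) < 1 / C := by positivity
  set w : ℂ := -↑y₂ - ↑B * (↑k + ↑y₁) / ↑C with hw
  set c2 : ℂ := 2 * ↑π * I * ↑x₁ * w - 2 * ↑π * I * ↑k * ↑x₂ - ↑π * (↑k + ↑y₁) ^ 2 / ↑C with hc2
  have e : ∀ m : ℤ, Gt B C x₁ x₂ y₁ y₂ m k
      = cexp c2 * cexp (-↑π * ↑(1/C) * (↑m + (↑x₁:ℂ)) ^ 2 + 2 * ↑π * I * ↑m * w) := by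
    intro m
    rw [Gt, ← Complex.exp_add]
    congr 1
    rw [hc2, hw]
    push_cast
    field_simp
    ring
  rw [tsum_congr e, tsum_mul_left, lemA hinvC (↑x₁ : ℂ) w]
  have hsq : ((Real.sqrt (1/C) : ℝ) : ℂ)⁻¹ = (Real.sqrt C : ℂ) := by
    rw [one_div, Real.sqrt_inv]
    push_cast
    rw [inv_inv]
  rw [hsq]
  rw [show cexp c2 * ((Real.sqrt C : ℂ) * cexp (-2 * ↑π * I * ↑x₁ * w) *
        ∑' j : ℤ, cexp (-↑π * (↑j + w) ^ 2 / ↑(1/C) - 2 * ↑π * I * ↑j * ↑x₁))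
      = (Real.sqrt C : ℂ) * ((cexp c2 * cexp (-2 * ↑π * I * ↑x₁ * w)) *
        ∑' j : ℤ, cexp (-↑π * (↑j + w) ^ 2 / ↑(1/C) - 2 * ↑π * I * ↑j * ↑x₁)) from by ring]
  rw [← tsum_mul_left]
  congr 1
  refine tsum_congr fun j => ?_
  rw [← Complex.exp_add, ← Complex.exp_add, Et]
  congr 1
  rw [hc2, hw]
  push_cast
  field_simp
  ring

lemma step7 (hA : 0 < A) (hC : 0 < C) (hAC : A * C = B ^ 2 + 1) (k j : ℤ) :
    cexp (-↑π * (↑A * (↑k + ↑y₁) ^ 2 + 2 * ↑B * (↑k + ↑y₁) * (↑(-j : ℤ) + ↑y₂)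
          + ↑C * (↑(-j : ℤ) + ↑y₂) ^ 2)
        - 2 * ↑π * I * (↑k * ↑x₂ - ↑(-j : ℤ) * ↑x₁))
      = Et B C x₁ x₂ y₁ y₂ j k := by
  have hC0 : (C : ℂ) ≠ 0 := by exact_mod_cast hC.ne'
  have hA' : (A : ℂ) = ((B : ℂ) ^ 2 + 1) / C := by
    field_simp
    exact_mod_cast hAC
  rw [Et]
  congr 1
  rw [hA']
  push_cast
  field_simp
  ring

end steps

private theorem goalCoord (A B C x₁ x₂ y₁ y₂ : ℝ) (hA : 0 < A) (hC : 0 < C)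
    (hAC : A * C = B ^ 2 + 1) :
    ∑' p : ℤ × ℤ, cexp (-↑π * (↑A * (↑p.1 + ↑x₁) ^ 2 + 2 * ↑B * (↑p.1 + ↑x₁) * (↑p.2 + ↑x₂)
          + ↑C * (↑p.2 + ↑x₂) ^ 2)
        - 2 * ↑π * I * ((↑p.1 + ↑x₁) * ↑y₂ - (↑p.2 + ↑x₂) * ↑y₁))
      = ∑' p : ℤ × ℤ, cexp (-↑π * (↑A * (↑p.1 + ↑y₁) ^ 2 + 2 * ↑B * (↑p.1 + ↑y₁) * (↑p.2 + ↑y₂)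
            + ↑C * (↑p.2 + ↑y₂) ^ 2)
          - 2 * ↑π * I * (↑p.1 * ↑x₂ - ↑p.2 * ↑x₁)) := by
  have hC0 : (C : ℂ) ≠ 0 := by exact_mod_cast hC.ne'
  have hπ := Real.pi_pos
  have h2C : (0:ℝ) < (2*C)⁻¹ := by positivity
  have h2A : (0:ℝ) < (2*A)⁻¹ := by positivity
  have hCi : (0:ℝ) < C⁻¹ := by positivity
  -- summability of the LHS family
  have hF : Summable (fun p : ℤ × ℤ =>
      cexp (-↑π * (↑A * (↑p.1 + ↑x₁) ^ 2 + 2 * ↑B * (↑p.1 + ↑x₁) * (↑p.2 + ↑x₂)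
          + ↑C * (↑p.2 + ↑x₂) ^ 2)
        - 2 * ↑π * I * ((↑p.1 + ↑x₁) * ↑y₂ - (↑p.2 + ↑x₂) * ↑y₁))) := by
    refine sum2D h2C h2A x₁ x₂ _ fun p => ?_
    rw [norm_cexp_eq _ (-(π * (A * ((p.1:ℝ) + x₁) ^ 2 + 2 * B * ((p.1:ℝ) + x₁) * ((p.2:ℝ) + x₂)
          + C * ((p.2:ℝ) + x₂) ^ 2)))
        (-(2 * π * (((p.1:ℝ) + x₁) * y₂ - ((p.2:ℝ) + x₂) * y₁))) (by push_cast; ring),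
      ← Real.exp_add]
    refine Real.exp_le_exp.mpr ?_
    nlinarith [Qbound hA hC hAC ((p.1:ℝ) + x₁) ((p.2:ℝ) + x₂), Real.pi_pos]
  -- summability of the RHS family
  have hH : Summable (fun p : ℤ × ℤ =>
      cexp (-↑π * (↑A * (↑p.1 + ↑y₁) ^ 2 + 2 * ↑B * (↑p.1 + ↑y₁) * (↑p.2 + ↑y₂)
          + ↑C * (↑p.2 + ↑y₂) ^ 2)
        - 2 * ↑π * I * (↑p.1 * ↑x₂ - ↑p.2 * ↑x₁))) := by
    refine sum2D h2C h2A y₁ y₂ _ fun p => ?_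
    rw [norm_cexp_eq _ (-(π * (A * ((p.1:ℝ) + y₁) ^ 2 + 2 * B * ((p.1:ℝ) + y₁) * ((p.2:ℝ) + y₂)
          + C * ((p.2:ℝ) + y₂) ^ 2)))
        (-(2 * π * ((p.1:ℝ) * x₂ - (p.2:ℝ) * x₁))) (by push_cast; ring),
      ← Real.exp_add]
    refine Real.exp_le_exp.mpr ?_
    nlinarith [Qbound hA hC hAC ((p.1:ℝ) + y₁) ((p.2:ℝ) + y₂), Real.pi_pos]
  -- summability of the intermediate family
  have hGu : Summable (Function.uncurry (Gt B C x₁ x₂ y₁ y₂)) := by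
    refine sum2D hCi hCi x₁ y₁ _ fun p => ?_
    rw [Function.uncurry, Gt,
      norm_cexp_eq _ (-(π * C⁻¹) * ((p.1:ℝ) + x₁) ^ 2 + -(π * C⁻¹) * ((p.2:ℝ) + y₁) ^ 2)
        (2 * π * ((p.1:ℝ) + x₁) * (-y₂ - B * ((p.2:ℝ) + y₁) / C) - 2 * π * (p.2:ℝ) * x₂)
        (by push_cast; field_simp; ring),
      Real.exp_add]
  have hsqC : ((Real.sqrt C : ℝ) : ℂ) ≠ 0 := by
    exact_mod_cast (Real.sqrt_ne_zero'.mpr hC)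
  calc
    ∑' p : ℤ × ℤ, cexp (-↑π * (↑A * (↑p.1 + ↑x₁) ^ 2 + 2 * ↑B * (↑p.1 + ↑x₁) * (↑p.2 + ↑x₂)
          + ↑C * (↑p.2 + ↑x₂) ^ 2)
        - 2 * ↑π * I * ((↑p.1 + ↑x₁) * ↑y₂ - (↑p.2 + ↑x₂) * ↑y₁))
      = ∑' m : ℤ, ∑' n : ℤ,
          cexp (-↑π * (↑A * (↑m + ↑x₁) ^ 2 + 2 * ↑B * (↑m + ↑x₁) * (↑n + ↑x₂)
            + ↑C * (↑n + ↑x₂) ^ 2)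
          - 2 * ↑π * I * ((↑m + ↑x₁) * ↑y₂ - (↑n + ↑x₂) * ↑y₁)) := Summable.tsum_prod hF
    _ = ∑' m : ℤ, ((Real.sqrt C : ℂ)⁻¹ * ∑' k : ℤ, Gt B C x₁ x₂ y₁ y₂ m k) :=
        tsum_congr (step2 A B C x₁ x₂ y₁ y₂ hA hC hAC)
    _ = (Real.sqrt C : ℂ)⁻¹ * ∑' m : ℤ, ∑' k : ℤ, Gt B C x₁ x₂ y₁ y₂ m k := tsum_mul_left
    _ = (Real.sqrt C : ℂ)⁻¹ * ∑' k : ℤ, ∑' m : ℤ, Gt B C x₁ x₂ y₁ y₂ m k := by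
        rw [Summable.tsum_comm hGu]
    _ = (Real.sqrt C : ℂ)⁻¹ * ∑' k : ℤ, ((Real.sqrt C : ℂ) *
          ∑' j : ℤ, Et B C x₁ x₂ y₁ y₂ j k) := by
        rw [tsum_congr (step5 B C x₁ x₂ y₁ y₂ hC)]
    _ = ∑' k : ℤ, ∑' j : ℤ, Et B C x₁ x₂ y₁ y₂ j k := by
        rw [tsum_mul_left, ← mul_assoc, inv_mul_cancel₀ hsqC, one_mul]
    _ = ∑' k : ℤ, ∑' n : ℤ,
          cexp (-↑π * (↑A * (↑k + ↑y₁) ^ 2 + 2 * ↑B * (↑k + ↑y₁) * (↑n + ↑y₂)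
            + ↑C * (↑n + ↑y₂) ^ 2)
          - 2 * ↑π * I * (↑k * ↑x₂ - ↑n * ↑x₁)) := by
        refine tsum_congr fun k => ?_
        rw [← (Equiv.neg ℤ).tsum_eq (fun n : ℤ =>
          cexp (-↑π * (↑A * (↑k + ↑y₁) ^ 2 + 2 * ↑B * (↑k + ↑y₁) * (↑n + ↑y₂)
            + ↑C * (↑n + ↑y₂) ^ 2)
          - 2 * ↑π * I * (↑k * ↑x₂ - ↑n * ↑x₁)))]
        exact (tsum_congr fun j => (step7 A B C x₁ x₂ y₁ y₂ hA hC hAC k j)).symm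
    _ = ∑' p : ℤ × ℤ, cexp (-↑π * (↑A * (↑p.1 + ↑y₁) ^ 2 + 2 * ↑B * (↑p.1 + ↑y₁) * (↑p.2 + ↑y₂)
          + ↑C * (↑p.2 + ↑y₂) ^ 2)
        - 2 * ↑π * I * (↑p.1 * ↑x₂ - ↑p.2 * ↑x₁)) := (Summable.tsum_prod hH).symm


/-- the theta-like identity. -/
theorem stmt2 (ω₁ ω₂ : ℂ) (h : 0 < covol ω₁ ω₂) (x y : ℂ) :
    ∑' p : ℤ × ℤ,
        Complex.exp ((-(Real.pi * Complex.normSq (lat ω₁ ω₂ p + x) / covol ω₁ ω₂ : ℝ) : ℂ)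
          - 2 * (Real.pi : ℂ) * I * (Esymp ω₁ ω₂ (lat ω₁ ω₂ p + x) y : ℝ))
      = ∑' p : ℤ × ℤ,
          Complex.exp ((-(Real.pi * Complex.normSq (lat ω₁ ω₂ p + y) / covol ω₁ ω₂ : ℝ) : ℂ)
            - 2 * (Real.pi : ℂ) * I * (Esymp ω₁ ω₂ (lat ω₁ ω₂ p) x : ℝ)) := by
  set a := covol ω₁ ω₂ with ha
  have ha0 : a ≠ 0 := h.ne'
  have ha0' : (a : ℂ) ≠ 0 := by exact_mod_cast ha0
  set x₁ : ℝ := -(conj ω₂ * x).im / a with hx₁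
  set x₂ : ℝ := (conj ω₁ * x).im / a with hx₂
  set y₁ : ℝ := -(conj ω₂ * y).im / a with hy₁
  set y₂ : ℝ := (conj ω₁ * y).im / a with hy₂
  have hx : x = (x₁:ℂ) * ω₁ + (x₂:ℂ) * ω₂ := by
    have k := key_decomp ω₁ ω₂ x
    rw [hx₁, hx₂]
    push_cast
    rw [div_mul_eq_mul_div, div_mul_eq_mul_div, ← add_div, eq_div_iff ha0', ha, covol]
    linear_combination -k
  have hy : y = (y₁:ℂ) * ω₁ + (y₂:ℂ) * ω₂ := by
    have k := key_decomp ω₁ ω₂ y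
    rw [hy₁, hy₂]
    push_cast
    rw [div_mul_eq_mul_div, div_mul_eq_mul_div, ← add_div, eq_div_iff ha0', ha, covol]
    linear_combination -k
  set A : ℝ := Complex.normSq ω₁ / a with hAd
  set B : ℝ := (conj ω₁ * ω₂).re / a with hBd
  set C : ℝ := Complex.normSq ω₂ / a with hCd
  have hω₁ : ω₁ ≠ 0 := by
    intro e
    rw [ha, covol, e] at h
    simp at h
  have hω₂ : ω₂ ≠ 0 := by
    intro e
    rw [ha, covol, e] at h
    simp at h
  have hApos : 0 < A := div_pos (Complex.normSq_pos.mpr hω₁) h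
  have hCpos : 0 < C := div_pos (Complex.normSq_pos.mpr hω₂) h
  have hACeq : A * C = B ^ 2 + 1 := by
    have hn : Complex.normSq ω₁ * Complex.normSq ω₂ = (conj ω₁ * ω₂).re ^ 2 + a ^ 2 := by
      have h1 : Complex.normSq (conj ω₁ * ω₂) = Complex.normSq ω₁ * Complex.normSq ω₂ := by
        rw [Complex.normSq_mul, Complex.normSq_conj]
      rw [← h1, Complex.normSq_apply, ha, covol]
      ring
    have key : ∀ n1 n2 r : ℝ, n1 * n2 = r ^ 2 + a ^ 2 → n1 / a * (n2 / a) = (r / a) ^ 2 + 1 := by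
      intro n1 n2 r hh
      field_simp
      linear_combination hh
    rw [hAd, hBd, hCd]
    exact key _ _ _ hn
  have hlatx : ∀ p : ℤ × ℤ,
      lat ω₁ ω₂ p + x = ((((p.1:ℝ) + x₁ : ℝ)):ℂ) * ω₁ + ((((p.2:ℝ) + x₂ : ℝ)):ℂ) * ω₂ := by
    intro p
    rw [lat, hx]
    push_cast
    ring
  have hlaty : ∀ p : ℤ × ℤ,
      lat ω₁ ω₂ p + y = ((((p.1:ℝ) + y₁ : ℝ)):ℂ) * ω₁ + ((((p.2:ℝ) + y₂ : ℝ)):ℂ) * ω₂ := by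
    intro p
    rw [lat, hy]
    push_cast
    ring
  have hlat0 : ∀ p : ℤ × ℤ,
      lat ω₁ ω₂ p = (((p.1:ℝ)):ℂ) * ω₁ + (((p.2:ℝ)):ℂ) * ω₂ := by
    intro p
    rw [lat]
    push_cast
    ring
  have haim : (conj ω₁ * ω₂).im = a := by rw [ha, covol]
  calc
    ∑' p : ℤ × ℤ,
        Complex.exp ((-(Real.pi * Complex.normSq (lat ω₁ ω₂ p + x) / a : ℝ) : ℂ)
          - 2 * (Real.pi : ℂ) * I * (Esymp ω₁ ω₂ (lat ω₁ ω₂ p + x) y : ℝ))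
      = ∑' p : ℤ × ℤ, cexp (-↑π * (↑A * (↑p.1 + ↑x₁) ^ 2 + 2 * ↑B * (↑p.1 + ↑x₁) * (↑p.2 + ↑x₂)
            + ↑C * (↑p.2 + ↑x₂) ^ 2)
          - 2 * ↑π * I * ((↑p.1 + ↑x₁) * ↑y₂ - (↑p.2 + ↑x₂) * ↑y₁)) := by
        refine tsum_congr fun p => ?_
        have r1 : Real.pi * Complex.normSq (lat ω₁ ω₂ p + x) / a
            = π * (A * ((p.1:ℝ) + x₁) ^ 2 + 2 * B * ((p.1:ℝ) + x₁) * ((p.2:ℝ) + x₂)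
              + C * ((p.2:ℝ) + x₂) ^ 2) := by
          rw [hlatx p, normSq_comb, hAd, hBd, hCd]
          field_simp
          try ring
          try simp
        have r2 : Esymp ω₁ ω₂ (lat ω₁ ω₂ p + x) y
            = ((p.1:ℝ) + x₁) * y₂ - ((p.2:ℝ) + x₂) * y₁ := by
          rw [Esymp, hlatx p, ← ha]
          nth_rewrite 1 [hy]
          rw [im_comb, haim, mul_div_assoc, div_self ha0, mul_one]
        congr 1
        rw [r1, r2]
        push_cast
        ring
    _ = ∑' p : ℤ × ℤ, cexp (-↑π * (↑A * (↑p.1 + ↑y₁) ^ 2 + 2 * ↑B * (↑p.1 + ↑y₁) * (↑p.2 + ↑y₂)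
            + ↑C * (↑p.2 + ↑y₂) ^ 2)
          - 2 * ↑π * I * (↑p.1 * ↑x₂ - ↑p.2 * ↑x₁)) :=
        goalCoord A B C x₁ x₂ y₁ y₂ hApos hCpos hACeq
    _ = ∑' p : ℤ × ℤ,
        Complex.exp ((-(Real.pi * Complex.normSq (lat ω₁ ω₂ p + y) / a : ℝ) : ℂ)
          - 2 * (Real.pi : ℂ) * I * (Esymp ω₁ ω₂ (lat ω₁ ω₂ p) x : ℝ)) := by
        refine (tsum_congr fun p => ?_).symm
        have r1 : Real.pi * Complex.normSq (lat ω₁ ω₂ p + y) / a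
            = π * (A * ((p.1:ℝ) + y₁) ^ 2 + 2 * B * ((p.1:ℝ) + y₁) * ((p.2:ℝ) + y₂)
              + C * ((p.2:ℝ) + y₂) ^ 2) := by
          rw [hlaty p, normSq_comb, hAd, hBd, hCd]
          field_simp
          try ring
          try simp
        have r2 : Esymp ω₁ ω₂ (lat ω₁ ω₂ p) x
            = (p.1:ℝ) * x₂ - (p.2:ℝ) * x₁ := by
          rw [Esymp, hlat0 p, ← ha]
          nth_rewrite 1 [hx]
          rw [im_comb, haim, mul_div_assoc, div_self ha0, mul_one]
        congr 1
        rw [r1, r2]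
        push_cast
        ring
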